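/- Let A, B be countably infinite sets with A ⊆ B and B \ A infinite, let C ⊆ ℕ be infinite, let f : A → C be an injection, let g : B → ℕ be an injection such that the range of g is almost contained in C (ran(g) \ C finite), C \ ran(g) is infinite, and f differs from g restricted to A only at finitely many points. Let F ⊆ C be finite. Then there exists an injection h : B → C such that h extends f, h differs from g at only finitely many points of B, and F ⊆ ran(h). -/

import Mathlib

/-- extension of almost-equal injections. -/
theorem stmt2 {α : Type*} (A B : Set α) (C : Set ℕ) (f g : α → ℕ) (F : Set ℕ)
    (hAB : A ⊆ B) (hAcnt : A.Countable) (hAinf : A.Infinite)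
    (hBcnt : B.Countable) (hBA : (B \ A).Infinite)
    (hC : C.Infinite)
    (hfinj : Set.InjOn f A) (hfC : Set.MapsTo f A C)
    (hginj : Set.InjOn g B)
    (hgC : (g '' B \ C).Finite) (hCg : (C \ g '' B).Infinite)
    (hfg : {x ∈ A | f x ≠ g x}.Finite)
    (hF : F.Finite) (hFC : F ⊆ C) :
    ∃ h : α → ℕ, Set.InjOn h B ∧ Set.MapsTo h B C ∧
      (∀ x ∈ A, h x = f x) ∧ {x ∈ B | h x ≠ g x}.Finite ∧ F ⊆ h '' B := by
  classical
  have hne : Nonempty α := hAinf.nonempty.elim fun a _ => ⟨a⟩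
  set E : Set α := {x ∈ A | f x ≠ g x} with hEdef
  -- the bad set S
  set S : Set α := {y ∈ B \ A | g y ∉ C ∨ g y ∈ f '' E ∨ g y ∈ F} with hSdef
  have hSB : S ⊆ B := fun y hy => hy.1.1
  have hS : S.Finite := by
    apply Set.Finite.of_finite_image (f := g) _ (hginj.mono hSB)
    apply Set.Finite.subset (((hgC.union (hfg.image f)).union hF))
    rintro _ ⟨y, hy, rfl⟩
    rcases hy.2 with h1 | h2 | h3
    · exact Or.inl (Or.inl ⟨⟨y, hSB ⟨hy.1, hy.2⟩, rfl⟩, h1⟩)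
    · exact Or.inl (Or.inr h2)
    · exact Or.inr h3
  -- fresh values
  set W : Set ℕ := C \ (g '' B ∪ (f '' E ∪ F)) with hWdef
  have hW : W.Infinite := by
    have : W = (C \ g '' B) \ (f '' E ∪ F) := by
      rw [Set.diff_diff]
    rw [this]
    exact hCg.diff ((hfg.image f).union hF)
  -- fA ∩ W = ∅
  have hfAW : ∀ x ∈ A, f x ∉ W := by
    intro x hx hw
    by_cases hxE : x ∈ E
    · exact hw.2 (Or.inr (Or.inl ⟨x, hxE, rfl⟩))
    · have : f x = g x := by
        by_contra hne'
        exact hxE ⟨hx, hne'⟩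
      exact hw.2 (Or.inl ⟨x, hAB hx, this.symm⟩)
  obtain ⟨u, hu⟩ := Set.countable_iff_exists_injOn.mp hBcnt
  let embW := hW.natEmbedding
  let σ : α → ℕ := fun x => (embW (u x) : ℕ)
  have hσW : ∀ x, σ x ∈ W := fun x => (embW (u x)).2
  have hσinj : Set.InjOn σ B := fun x hx y hy hxy =>
    hu hx hy (embW.injective (Subtype.ext hxy))
  -- points to hit F
  set F₀ : Set ℕ := F \ f '' A with hF0def
  have hBAS : ((B \ A) \ S).Infinite := hBA.diff hS
  let emb2 := hBAS.natEmbedding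
  let e : ℕ → α := fun n => (emb2 n : α)
  have heinj : Function.Injective e := fun a b hab =>
    emb2.injective (Subtype.ext hab)
  have heBAS : ∀ n, e n ∈ (B \ A) \ S := fun n => (emb2 n).2
  let inv : α → ℕ := Function.invFun e
  have hinv : ∀ n, inv (e n) = n := Function.leftInverse_invFun heinj
  set P : Set α := e '' F₀ with hPdef
  have hP : P.Finite := (hF.diff : (F \ f '' A).Finite).image e
  refine ⟨fun x => if x ∈ A then f x else if x ∈ S then σ x else
    if x ∈ P then inv x else g x, ?_, ?_, ?_, ?_, ?_⟩
  · -- injectivity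
    -- first describe the value on each piece
    intro x hx y hy hxy
    simp only at hxy
    -- helper facts
    have key : ∀ z ∈ B, ∀ w,
        (if z ∈ A then f z else if z ∈ S then σ z else if z ∈ P then inv z else g z) = w →
        (z ∈ A ∧ w = f z) ∨ (z ∉ A ∧ z ∈ S ∧ w = σ z) ∨
        (z ∉ A ∧ z ∉ S ∧ ∃ c ∈ F₀, z = e c ∧ w = c) ∨
        (z ∉ A ∧ z ∉ S ∧ z ∉ P ∧ w = g z) := by
      intro z hz w hw
      by_cases h1 : z ∈ A
      · simp [h1] at hw; exact Or.inl ⟨h1, hw.symm⟩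
      by_cases h2 : z ∈ S
      · simp [h1, h2] at hw; exact Or.inr (Or.inl ⟨h1, h2, hw.symm⟩)
      by_cases h3 : z ∈ P
      · simp [h1, h2, h3] at hw
        obtain ⟨c, hc, rfl⟩ := h3
        exact Or.inr (Or.inr (Or.inl ⟨h1, h2, c, hc, rfl, by rw [← hw, hinv]⟩))
      · simp [h1, h2, h3] at hw
        exact Or.inr (Or.inr (Or.inr ⟨h1, h2, h3, hw.symm⟩))
    -- facts about values
    have hgood : ∀ z, z ∈ B → z ∉ A → z ∉ S → g z ∈ C ∧ g z ∉ f '' E ∧ g z ∉ F := by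
      intro z hz h1 h2
      by_contra hc
      push_neg at hc
      apply h2
      refine ⟨⟨hz, h1⟩, ?_⟩
      by_cases c1 : g z ∈ C
      · by_cases c2 : g z ∈ f '' E
        · exact Or.inr (Or.inl c2)
        · exact Or.inr (Or.inr (hc c1 c2))
      · exact Or.inl c1
    rcases key x hx _ hxy with ⟨hx1, hv1⟩ | ⟨hx1, hx2, hv1⟩ | ⟨hx1, hx2, c, hc, hxe, hv1⟩ | ⟨hx1, hx2, hx3, hv1⟩ <;>
      rcases key y hy _ rfl with ⟨hy1, hv2⟩ | ⟨hy1, hy2, hv2⟩ | ⟨hy1, hy2, d, hd, hye, hv2⟩ | ⟨hy1, hy2, hy3, hv2⟩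
    · exact hfinj hx1 hy1 (hv1.symm.trans hv2)
    · -- A vs S
      exfalso
      have h : f x ∈ W := by rw [hv1.symm.trans hv2]; exact hσW y
      exact hfAW x hx1 h
    · -- A vs P
      exfalso
      exact hd.2 ⟨x, hx1, hv1.symm.trans hv2⟩
    · -- A vs else : f x = g y
      have heq : f x = g y := hv1.symm.trans hv2
      by_cases hxE : x ∈ E
      · exact absurd ⟨x, hxE, heq⟩ (hgood y hy hy1 hy2).2.1
      · have hfx : f x = g x := by by_contra h; exact hxE ⟨hx1, h⟩
        have := hginj hx hy (hfx ▸ heq)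
        exact absurd (this ▸ hx1) hy1
    · -- S vs A
      exfalso
      have h : f y ∈ W := by rw [hv2.symm.trans hv1]; exact hσW x
      exact hfAW y hy1 h
    · exact hσinj hx hy (hv1.symm.trans hv2)
    · -- S vs P : σ x = d ∈ F
      exfalso
      have h : σ x = d := hv1.symm.trans hv2
      exact (hσW x).2 (Or.inr (Or.inr (h ▸ hd.1)))
    · -- S vs else : σ x = g y ∈ g '' B
      exfalso
      exact (hσW x).2 (Or.inl ⟨y, hy, (hv1.symm.trans hv2).symm⟩)
    · -- P vs A
      exfalso
      exact hc.2 ⟨y, hy1, hv2.symm.trans hv1⟩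
    · -- P vs S
      exfalso
      have h : σ y = c := hv2.symm.trans hv1
      exact (hσW y).2 (Or.inr (Or.inr (h ▸ hc.1)))
    · -- P vs P
      have hcd : c = d := hv1.symm.trans hv2
      rw [hxe, hye, hcd]
    · -- P vs else: c = g y, but g y ∉ F
      exfalso
      have h : c = g y := hv1.symm.trans hv2
      exact (hgood y hy hy1 hy2).2.2 (h ▸ hc.1)
    · -- else vs A
      have heq : f y = g x := hv2.symm.trans hv1
      by_cases hyE : y ∈ E
      · exact absurd ⟨y, hyE, heq⟩ (hgood x hx hx1 hx2).2.1
      · have hfy : f y = g y := by by_contra h; exact hyE ⟨hy1, h⟩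
        have := hginj hy hx (hfy ▸ heq)
        exact absurd (this ▸ hy1) hx1
    · -- else vs S
      exfalso
      exact (hσW y).2 (Or.inl ⟨x, hx, (hv2.symm.trans hv1).symm⟩)
    · -- else vs P
      exfalso
      have h : d = g x := hv2.symm.trans hv1
      exact (hgood x hx hx1 hx2).2.2 (h ▸ hd.1)
    · exact hginj hx hy (hv1.symm.trans hv2)
  · -- MapsTo C
    intro x hx
    simp only
    by_cases h1 : x ∈ A
    · simpa [h1] using hfC h1
    by_cases h2 : x ∈ S
    · simpa [h1, h2] using (hσW x).1
    by_cases h3 : x ∈ P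
    · simp only [h1, if_false, h2, h3, if_true]
      obtain ⟨c, hc, rfl⟩ := h3
      rw [hinv]
      exact hFC hc.1
    · simp only [h1, h2, h3, if_false]
      by_contra hgc
      exact h2 ⟨⟨hx, h1⟩, Or.inl hgc⟩
  · intro x hx; simp [hx]
  · -- almost equal to g
    apply Set.Finite.subset ((hfg.union hS).union hP)
    intro x hx
    simp only [Set.mem_setOf_eq] at hx
    obtain ⟨hxB, hne'⟩ := hx
    by_cases h1 : x ∈ A
    · left; left
      refine ⟨h1, ?_⟩
      intro hfx
      apply hne'; simp [h1, hfx]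
    by_cases h2 : x ∈ S
    · exact Or.inl (Or.inr h2)
    by_cases h3 : x ∈ P
    · exact Or.inr h3
    · exfalso; apply hne'; simp [h1, h2, h3]
  · -- F ⊆ range
    intro c hc
    by_cases hcf : c ∈ f '' A
    · obtain ⟨a, ha, rfl⟩ := hcf
      exact ⟨a, hAB ha, by simp [ha]⟩
    · have hc0 : c ∈ F₀ := ⟨hc, hcf⟩
      refine ⟨e c, (heBAS c).1.1, ?_⟩
      have h1 : e c ∉ A := (heBAS c).1.2
      have h2 : e c ∉ S := (heBAS c).2
      have h3 : e c ∈ P := ⟨c, hc0, rfl⟩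
      simp [h1, h2, h3, hinv]
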